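/- Let Γ be the smallest set of vertices of G_s containing {s} ∪ r(s) ∪ Γ₀ and closed under adding meeting points: if x, y ∈ Γ and z is a meeting point of x and y (there exist two vertex-disjoint directed paths from x to z and from y to z), then z ∈ Γ. Then for each x ∈ Γ, define the Sybil cluster K_x as the set of vertices t such that some directed path from x to t contains no vertex of Γ other than x. The clusters {K_x : x ∈ Γ} are pairwise disjoint and their union is the whole vertex set of G_s. -/

import Mathlib

/-- `p` is a directed walk from `a` to `b` in the graph with adjacency `adj`. -/
def IsWalk {V : Type*} (adj : V → V → Prop) (a b : V) (p : List V) : Prop :=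
  p.head? = some a ∧ p.getLast? = some b ∧ p.Chain' adj

/-- `b` is reachable from `a`. -/
def Reaches {V : Type*} (adj : V → V → Prop) (a b : V) : Prop :=
  ∃ p, IsWalk adj a b p

/-- `u` dominates `x` (w.r.t. root `s`): every walk from `s` to `x` contains `u`. -/
def Dom {V : Type*} (adj : V → V → Prop) (s u x : V) : Prop :=
  ∀ p, IsWalk adj s x p → u ∈ p

/-- `z` is a meeting point of `x` and `y`: two directed walks from `x` and `y` to `z`
that are vertex-disjoint except for the common endpoint `z`. -/
def MeetPoint {V : Type*} (adj : V → V → Prop) (x y z : V) : Prop :=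
  ∃ p q, IsWalk adj x z p ∧ IsWalk adj y z q ∧ ∀ w, w ∈ p → w ∈ q → w = z

/-- The smallest set of vertices containing `s`, the out-neighbors of `s` and `Γ₀`,
closed under adding meeting points of members (graphical non-Sybil agents). -/
inductive Gamma {V : Type*} (adj : V → V → Prop) (s : V) (Γ0 : Set V) : V → Prop
  | base (x : V) : (x = s ∨ adj s x ∨ x ∈ Γ0) → Gamma adj s Γ0 x
  | meet (x y z : V) : Gamma adj s Γ0 x → Gamma adj s Γ0 y → MeetPoint adj x y z →
      Gamma adj s Γ0 z

/-- The Sybil cluster of `x`: vertices `t` admitting a walk from `x` to `t`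
containing no vertex of `Γ` other than `x`. -/
def Cluster {V : Type*} (adj : V → V → Prop) (s : V) (Γ0 : Set V) (x t : V) : Prop :=
  ∃ p, IsWalk adj x t p ∧ ∀ w ∈ p, Gamma adj s Γ0 w → w = x


private lemma walk_cut {V : Type*} (adj : V → V → Prop) (S : V → Prop) {x t : V} {p : List V}
    (hp : IsWalk adj x t p) (hne : ∃ w ∈ p, S w) :
    ∃ z p', IsWalk adj x z p' ∧ S z ∧ z ∈ p ∧ (∀ w ∈ p', w ∈ p) ∧
      ∀ w ∈ p', S w → w = z := by
  classical
  obtain ⟨h1, h2, h3⟩ := hp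
  set P : V → Bool := fun w => decide (¬ S w) with hP
  have hsplit : p = p.takeWhile P ++ p.dropWhile P := (List.takeWhile_append_dropWhile ..).symm
  have hl2ne : p.dropWhile P ≠ [] := by
    intro h
    obtain ⟨w, hw, hSw⟩ := hne
    have hwl1 : w ∈ p.takeWhile P := by
      rw [hsplit, h, List.append_nil] at hw; exact hw
    have := List.mem_takeWhile_imp hwl1
    simp only [hP, decide_eq_true_eq] at this
    exact this hSw
  set z := (p.dropWhile P).head hl2ne with hz
  have hSz : S z := by
    have := List.head_dropWhile_not P hl2ne
    simp only [hP, decide_eq_false_iff_not, not_not] at this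
    exact this
  refine ⟨z, p.takeWhile P ++ [z], ⟨?_, ?_, ?_⟩, hSz, ?_, ?_, ?_⟩
  · -- head?
    rcases he : p.takeWhile P with _ | ⟨a, l⟩
    · have hp' : p = z :: (p.dropWhile P).tail := by
        conv_lhs => rw [hsplit, he]
        exact (List.cons_head_tail hl2ne).symm
      rw [hp'] at h1
      simp at h1 ⊢
      exact h1
    · have hp' : p = a :: (l ++ p.dropWhile P) := by
        conv_lhs => rw [hsplit, he]
        simp
      rw [hp'] at h1
      simp at h1 ⊢
      exact h1
  · exact List.getLast?_concat
  · -- chain'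
    have hp' : p = (p.takeWhile P ++ [z]) ++ (p.dropWhile P).tail := by
      conv_lhs => rw [hsplit]
      rw [List.append_assoc]
      congr 1
      exact (List.cons_head_tail hl2ne).symm
    rw [hp'] at h3
    exact (List.isChain_append.mp h3).1
  · rw [hsplit]
    exact List.mem_append_right _ (List.head_mem hl2ne)
  · intro w hw
    rcases List.mem_append.mp hw with hw | hw
    · rw [hsplit]; exact List.mem_append_left _ hw
    · rw [List.mem_singleton] at hw
      subst hw
      rw [hsplit]
      exact List.mem_append_right _ (List.head_mem hl2ne)
  · intro w hw hSw
    rcases List.mem_append.mp hw with hw | hw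
    · exfalso
      have := List.mem_takeWhile_imp hw
      simp only [hP, decide_eq_true_eq] at this
      exact this hSw
    · exact List.mem_singleton.mp hw

private lemma isWalk_reverse {V : Type*} {adj : V → V → Prop} {a b : V} {p : List V}
    (h : IsWalk adj a b p) : IsWalk (flip adj) b a p.reverse := by
  obtain ⟨h1, h2, h3⟩ := h
  refine ⟨?_, ?_, ?_⟩
  · rw [List.head?_reverse]; exact h2
  · rw [List.getLast?_reverse]; exact h1
  · exact List.isChain_reverse.mpr h3

private lemma walk_cut' {V : Type*} (adj : V → V → Prop) (S : V → Prop) {x t : V} {p : List V}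
    (hp : IsWalk adj x t p) (hne : ∃ w ∈ p, S w) :
    ∃ z p', IsWalk adj z t p' ∧ S z ∧ z ∈ p ∧ (∀ w ∈ p', w ∈ p) ∧
      ∀ w ∈ p', S w → w = z := by
  obtain ⟨z, p', hw, hSz, hzp, hsub, hlast⟩ :=
    walk_cut (flip adj) S (isWalk_reverse hp) (by simpa using hne)
  refine ⟨z, p'.reverse, isWalk_reverse hw, hSz, by simpa using hzp, ?_, ?_⟩
  · intro w hwp
    have := hsub w (List.mem_reverse.mp hwp)
    simpa using this
  · intro w hwp
    exact hlast w (List.mem_reverse.mp hwp)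

/-- The Sybil clusters `{K_x : x ∈ Γ}` are pairwise disjoint and their union is
the whole vertex set. -/
theorem stmt4 {V : Type*} [Fintype V] (adj : V → V → Prop) (s : V) (Γ0 : Set V)
    (hreach : ∀ x : V, Reaches adj s x) :
    (∀ x y : V, Gamma adj s Γ0 x → Gamma adj s Γ0 y → x ≠ y →
      ∀ t : V, Cluster adj s Γ0 x t → Cluster adj s Γ0 y t → False) ∧
    (∀ t : V, ∃ x : V, Gamma adj s Γ0 x ∧ Cluster adj s Γ0 x t) := by
  constructor
  · rintro x y hx hy hxy t ⟨p, hp, hpG⟩ ⟨q, hq, hqG⟩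
    have htp : t ∈ p := List.mem_of_getLast? hp.2.1
    have htq : t ∈ q := List.mem_of_getLast? hq.2.1
    obtain ⟨z, p1, hw1, hzq, hzp, hsub1, hz1⟩ :=
      walk_cut adj (· ∈ q) hp ⟨t, htp, htq⟩
    obtain ⟨z', q1, hw2, hz'z, hz'q, hsub2, hz2⟩ :=
      walk_cut adj (· = z) hq ⟨z, hzq, rfl⟩
    rw [hz'z] at hw2 hz'q
    have hmeet : MeetPoint adj x y z :=
      ⟨p1, q1, hw1, hw2, fun w hwp hwq => hz1 w hwp (hsub2 w hwq)⟩
    have hzG := Gamma.meet x y z hx hy hmeet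
    have hzx := hpG z hzp hzG
    have hzy := hqG z hz'q hzG
    exact hxy (hzx ▸ hzy ▸ rfl)
  · intro t
    obtain ⟨p, hp⟩ := hreach t
    have hsp : s ∈ p := List.mem_of_mem_head? hp.1
    obtain ⟨z, p', hw, hzG, _, _, hlast⟩ :=
      walk_cut' adj (Gamma adj s Γ0) hp ⟨s, hsp, Gamma.base s (Or.inl rfl)⟩
    exact ⟨z, hzG, p', hw, hlast⟩
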